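/- Let c > 0, let I ⊆ ℝ be an open interval, let V : ℝ → ℝ be continuously differentiable, and let u₋, u₊ : I → ℝ be continuously differentiable functions with u₋(E) < u₊(E), V(u₋(E)) = V(u₊(E)) = E, V(y) < E for all y ∈ (u₋(E), u₊(E)), and V'(u₋(E)) ≠ 0 ≠ V'(u₊(E)), for every E ∈ I. Assume y ↦ (E - V(y))^{-1/2} is integrable on (u₋(E), u₊(E)) for each E ∈ I. Then the classical action K(E) := 2√(2/c) ∫_{u₋(E)}^{u₊(E)} √(E - V(y)) dy is differentiable on I, and K'(E) = (1/c)·T(E), where T(E) := √(2c) ∫_{u₋(E)}^{u₊(E)} (E - V(y))^{-1/2} dy. -/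

import Mathlib

open MeasureTheory intervalIntegral

/-- Uniform bound on the slope of `√(s+h)` relative to `√|s|`. -/
lemma sqrt_slope_bound {s h : ℝ} (hs : s ≠ 0) (hh : h ≠ 0) :
    |(Real.sqrt (s + h) - Real.sqrt s) / h| ≤ (Real.sqrt |s|)⁻¹ := by
  rcases hs.lt_or_gt with hneg | hpos
  · rw [abs_of_neg hneg]
    have hs0 : Real.sqrt s = 0 := Real.sqrt_eq_zero'.mpr hneg.le
    by_cases hsh : s + h ≤ 0
    · have : Real.sqrt (s + h) = 0 := Real.sqrt_eq_zero'.mpr hsh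
      simp [this, hs0]
    · push_neg at hsh
      have hhpos : 0 < h := by linarith
      have ht : 0 < Real.sqrt (-s) := Real.sqrt_pos.mpr (by linarith)
      have key : 2 * Real.sqrt (-s) * Real.sqrt (s + h) ≤ h := by
        calc 2 * Real.sqrt (-s) * Real.sqrt (s + h)
            ≤ Real.sqrt (-s) ^ 2 + Real.sqrt (s + h) ^ 2 := two_mul_le_add_sq _ _
          _ = h := by
              rw [Real.sq_sqrt (by linarith), Real.sq_sqrt hsh.le]; ring
      have hnn : 0 ≤ (Real.sqrt (s + h) - Real.sqrt s) / h := by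
        apply div_nonneg _ hhpos.le
        rw [hs0]; simp [Real.sqrt_nonneg]
      rw [abs_of_nonneg hnn, hs0, sub_zero, div_le_iff₀ hhpos]
      have h2 : Real.sqrt (-s) * Real.sqrt (s + h) ≤ h := by
        nlinarith [Real.sqrt_nonneg (s + h)]
      calc Real.sqrt (s + h) = (Real.sqrt (-s))⁻¹ * (Real.sqrt (-s) * Real.sqrt (s + h)) := by
            field_simp
        _ ≤ (Real.sqrt (-s))⁻¹ * h := by
            exact mul_le_mul_of_nonneg_left h2 (inv_nonneg.mpr ht.le)
  · rw [abs_of_pos hpos]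
    have hsq : 0 < Real.sqrt s := Real.sqrt_pos.mpr hpos
    by_cases hsh : s + h ≤ 0
    · have h0 : Real.sqrt (s + h) = 0 := Real.sqrt_eq_zero'.mpr hsh
      have hhneg : h < 0 := by
        rcases lt_or_ge h 0 with h' | h'
        · exact h'
        · exfalso; linarith
      rw [h0, zero_sub, abs_div, abs_neg, abs_of_nonneg (Real.sqrt_nonneg s),
        abs_of_neg hhneg]
      calc Real.sqrt s / (-h) ≤ Real.sqrt s / s :=
            div_le_div_of_nonneg_left (Real.sqrt_nonneg s) hpos (by linarith)
        _ = 1 / Real.sqrt s := Real.sqrt_div_self'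
        _ = (Real.sqrt s)⁻¹ := one_div _
    · push_neg at hsh
      have e1 : Real.sqrt (s + h) ^ 2 = s + h := Real.sq_sqrt hsh.le
      have e2 : Real.sqrt s ^ 2 = s := Real.sq_sqrt hpos.le
      have key : (Real.sqrt (s + h) - Real.sqrt s) * (Real.sqrt (s + h) + Real.sqrt s) = h := by
        nlinarith
      have hden : 0 < Real.sqrt (s + h) + Real.sqrt s := by
        have := Real.sqrt_nonneg (s + h); linarith
      have habs : |Real.sqrt (s + h) - Real.sqrt s| = |h| / (Real.sqrt (s + h) + Real.sqrt s) := by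
        rw [eq_div_iff hden.ne', ← abs_of_pos hden, ← abs_mul, key]
      rw [abs_div, habs, div_div, div_le_iff₀ (by positivity)]
      have hone : (Real.sqrt s)⁻¹ * Real.sqrt s = 1 := inv_mul_cancel₀ hsq.ne'
      nlinarith [mul_nonneg (mul_nonneg (inv_nonneg.mpr hsq.le) (Real.sqrt_nonneg (s + h)))
        (abs_nonneg h), abs_nonneg h]

lemma deriv_lower_est {V : ℝ → ℝ} (hV : ContDiff ℝ 1 V) (z : ℝ) (hz : deriv V z ≠ 0) :
    ∃ r > 0, ∀ y, |y - z| ≤ r → |deriv V z| / 2 * |y - z| ≤ |V y - V z| := by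
  have hc : Continuous (deriv V) := hV.continuous_deriv le_rfl
  have hm : 0 < |deriv V z| / 2 := by positivity
  obtain ⟨r, hr, hball⟩ := Metric.continuous_iff.mp hc z _ hm
  refine ⟨r / 2, by positivity, fun y hy => ?_⟩
  have hd : ∀ ξ, |ξ - z| ≤ r / 2 → |deriv V z| / 2 ≤ |deriv V ξ| := by
    intro ξ hξ
    have := hball ξ (by rw [Real.dist_eq]; linarith)
    rw [Real.dist_eq] at this
    have := abs_sub_abs_le_abs_sub (deriv V ξ) (deriv V z)
    cases' abs_cases (deriv V ξ - deriv V z) with h h <;>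
      cases' abs_cases (deriv V ξ) with h2 h2 <;> cases' abs_cases (deriv V z) with h3 h3 <;>
      linarith
  rcases eq_or_ne y z with rfl | hyz
  · simp
  have hVd : ∀ x : ℝ, HasDerivAt V (deriv V x) x := fun x =>
    (hV.differentiable one_ne_zero x).hasDerivAt
  rcases hyz.lt_or_gt with hlt | hlt
  · obtain ⟨ξ, hξ, hslope⟩ := exists_hasDerivAt_eq_slope V (deriv V) hlt
      (hV.continuous.continuousOn) (fun x _ => hVd x)
    have hξd : |ξ - z| ≤ r / 2 := by
      rw [abs_le] at hy ⊢; cases hξ; constructor <;> linarith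
    have := hd ξ hξd
    have hne : z - y ≠ 0 := sub_ne_zero.mpr hyz.symm
    have heq : |V y - V z| = |deriv V ξ| * |y - z| := by
      rw [← abs_mul, hslope]; congr 1; field_simp; try ring
    rw [heq]
    exact mul_le_mul_of_nonneg_right this (abs_nonneg _)
  · obtain ⟨ξ, hξ, hslope⟩ := exists_hasDerivAt_eq_slope V (deriv V) hlt
      (hV.continuous.continuousOn) (fun x _ => hVd x)
    have hξd : |ξ - z| ≤ r / 2 := by
      rw [abs_le] at hy ⊢; cases hξ; constructor <;> linarith
    have := hd ξ hξd
    have hne : y - z ≠ 0 := sub_ne_zero.mpr hyz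
    have heq : |V y - V z| = |deriv V ξ| * |y - z| := by
      rw [← abs_mul, hslope]; congr 1; field_simp; try ring
    rw [heq]
    exact mul_le_mul_of_nonneg_right this (abs_nonneg _)

lemma integrableOn_abs_rpow_neg_half (z α β : ℝ) :
    IntegrableOn (fun y => |y - z| ^ (-(1/2) : ℝ)) (Set.Icc α β) := by
  have hr : (-1 : ℝ) < -(1/2) := by norm_num
  have hleft : IntegrableOn (fun y => |y - z| ^ (-(1/2) : ℝ)) (Set.Icc (min α z) z) := by
    have h1 : IntervalIntegrable (fun x : ℝ => (z - x) ^ (-(1/2) : ℝ)) volume (min α z) z := by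
      have := (intervalIntegrable_rpow' (a := z - min α z) (b := 0) hr).comp_sub_left z
      simpa using this
    have h2 : IntegrableOn (fun x : ℝ => (z - x) ^ (-(1/2) : ℝ)) (Set.Icc (min α z) z) := by
      rw [integrableOn_Icc_iff_integrableOn_Ioc]
      have := intervalIntegrable_iff.mp h1
      rwa [Set.uIoc_of_le (min_le_right α z)] at this
    apply h2.congr_fun _ measurableSet_Icc
    intro y hy
    simp only []
    rw [abs_of_nonpos (by linarith [hy.2] : y - z ≤ 0), neg_sub]
  have hright : IntegrableOn (fun y => |y - z| ^ (-(1/2) : ℝ)) (Set.Icc z (max β z)) := by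
    have h1 : IntervalIntegrable (fun x : ℝ => (x - z) ^ (-(1/2) : ℝ)) volume z (max β z) := by
      have := (intervalIntegrable_rpow' (a := 0) (b := max β z - z) hr).comp_sub_right z
      simpa using this
    have h2 : IntegrableOn (fun x : ℝ => (x - z) ^ (-(1/2) : ℝ)) (Set.Icc z (max β z)) := by
      rw [integrableOn_Icc_iff_integrableOn_Ioc]
      have := intervalIntegrable_iff.mp h1
      rwa [Set.uIoc_of_le (le_max_right β z)] at this
    apply h2.congr_fun _ measurableSet_Icc
    intro y hy
    simp only []
    rw [abs_of_nonneg (by linarith [hy.1] : 0 ≤ y - z)]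
  have := hleft.union hright
  apply this.mono_set
  intro y hy
  rcases le_total y z with h | h
  · exact Or.inl ⟨le_trans (min_le_left α z) hy.1, h⟩
  · exact Or.inr ⟨h, le_trans hy.2 (le_max_left β z)⟩

/-- The classical action `K(E) = 2√(2/c) ∫_{u₋(E)}^{u₊(E)} √(E - V(y)) dy`
satisfies `K'(E) = T(E)/c`, where
`T(E) = √(2c) ∫_{u₋(E)}^{u₊(E)} (E - V(y))^{-1/2} dy` is the period. -/
theorem stmt_12 (c : ℝ) (hc : 0 < c)
    (I : Set ℝ) (hI : IsOpen I) (hIconn : I.OrdConnected)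
    (V : ℝ → ℝ) (hV : ContDiff ℝ 1 V)
    (um up : ℝ → ℝ) (hum : ContDiffOn ℝ 1 um I) (hup : ContDiffOn ℝ 1 up I)
    (hlt : ∀ E ∈ I, um E < up E)
    (hVm : ∀ E ∈ I, V (um E) = E) (hVp : ∀ E ∈ I, V (up E) = E)
    (hbelow : ∀ E ∈ I, ∀ y ∈ Set.Ioo (um E) (up E), V y < E)
    (hV'm : ∀ E ∈ I, deriv V (um E) ≠ 0) (hV'p : ∀ E ∈ I, deriv V (up E) ≠ 0)
    (hint : ∀ E ∈ I,
      IntervalIntegrable (fun y => 1 / Real.sqrt (E - V y)) volume (um E) (up E)) :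
    ∀ E ∈ I,
      HasDerivAt
        (fun E' => 2 * Real.sqrt (2 / c) * ∫ y in um E'..up E', Real.sqrt (E' - V y))
        ((Real.sqrt (2 * c) * ∫ y in um E..up E, 1 / Real.sqrt (E - V y)) / c) E := by
  intro E₀ hE₀
  have hVc : Continuous V := hV.continuous
  have humc : ContinuousOn um I := hum.continuousOn
  have hupc : ContinuousOn up I := hup.continuousOn
  set p := um E₀ with hp
  set P := up E₀ with hP
  have hpP : p < P := hlt E₀ hE₀
  obtain ⟨rm, hrm, hestm⟩ := deriv_lower_est hV p (hV'm E₀ hE₀)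
  obtain ⟨rP, hrP, hestP⟩ := deriv_lower_est hV P (hV'p E₀ hE₀)
  have hVmE : V p = E₀ := hVm E₀ hE₀
  have hVPE : V P = E₀ := hVp E₀ hE₀
  -- choose δ
  obtain ⟨δ₁, hδ₁, hball₁⟩ := Metric.isOpen_iff.mp hI E₀ hE₀
  have humct : ContinuousAt um E₀ := humc.continuousAt (hI.mem_nhds hE₀)
  have hupct : ContinuousAt up E₀ := hupc.continuousAt (hI.mem_nhds hE₀)
  obtain ⟨δ₂, hδ₂, hum2⟩ := Metric.continuousAt_iff.mp humct rm hrm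
  obtain ⟨δ₃, hδ₃, hup3⟩ := Metric.continuousAt_iff.mp hupct rP hrP
  set δ := min δ₁ (min δ₂ δ₃) with hδdef
  have hδ : 0 < δ := lt_min hδ₁ (lt_min hδ₂ hδ₃)
  have hδδ₂ : δ ≤ δ₂ := le_trans (min_le_right _ _) (min_le_left _ _)
  have hδδ₃ : δ ≤ δ₃ := le_trans (min_le_right _ _) (min_le_right _ _)
  have hδI : Metric.ball E₀ δ ⊆ I := fun x hx => hball₁ (by
    simp only [Metric.mem_ball] at hx ⊢
    exact lt_of_lt_of_le hx (min_le_left _ _))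
  set E₁ := E₀ + δ / 2 with hE₁def
  have hE₁ball : E₁ ∈ Metric.ball E₀ δ := by
    simp only [Metric.mem_ball, Real.dist_eq, hE₁def]
    rw [show E₀ + δ/2 - E₀ = δ/2 by ring, abs_of_pos (by linarith : (0:ℝ) < δ/2)]
    linarith
  have hE₁I : E₁ ∈ I := hδI hE₁ball
  have hE₀E₁ : E₀ ≤ E₁ := by simp only [hE₁def]; linarith
  set a := um E₁ with ha
  set b := up E₁ with hb
  have hab : a < b := hlt E₁ hE₁I
  have hap : |a - p| < rm := by
    have := hum2 (by
      simp only [Real.dist_eq, hE₁def]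
      rw [show E₀ + δ/2 - E₀ = δ/2 by ring, abs_of_pos (by linarith : (0:ℝ) < δ/2)]
      linarith)
    rwa [Real.dist_eq] at this
  have hbP : |b - P| < rP := by
    have := hup3 (by
      simp only [Real.dist_eq, hE₁def]
      rw [show E₀ + δ/2 - E₀ = δ/2 by ring, abs_of_pos (by linarith : (0:ℝ) < δ/2)]
      linarith)
    rwa [Real.dist_eq] at this
  -- side values are above the energy level
  have hside_m : ∀ E, E ∈ I → E ≤ E₁ → ∀ y ∈ Set.uIcc (um E) a, E ≤ V y := by
    intro E hEI hle y hy
    have hsub : Set.uIcc E E₁ ⊆ I := by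
      rw [Set.uIcc_of_le hle]; exact hIconn.out hEI hE₁I
    obtain ⟨E', hE', hyE'⟩ := intermediate_value_uIcc (humc.mono hsub) hy
    rw [← hyE', hVm E' (hsub hE')]
    rw [Set.uIcc_of_le hle] at hE'; exact hE'.1
  have hside_p : ∀ E, E ∈ I → E ≤ E₁ → ∀ y ∈ Set.uIcc (up E) b, E ≤ V y := by
    intro E hEI hle y hy
    have hsub : Set.uIcc E E₁ ⊆ I := by
      rw [Set.uIcc_of_le hle]; exact hIconn.out hEI hE₁I
    obtain ⟨E', hE', hyE'⟩ := intermediate_value_uIcc (hupc.mono hsub) hy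
    rw [← hyE', hVp E' (hsub hE')]
    rw [Set.uIcc_of_le hle] at hE'; exact hE'.1
  -- localization of the sqrt integral
  have hconts : ∀ E : ℝ, Continuous fun y => Real.sqrt (E - V y) := fun E =>
    Real.continuous_sqrt.comp (continuous_const.sub hVc)
  have hloc : ∀ E, E ∈ I → E ≤ E₁ →
      (∫ y in um E..up E, Real.sqrt (E - V y)) = ∫ y in a..b, Real.sqrt (E - V y) := by
    intro E hEI hle
    have hzm : (∫ y in um E..a, Real.sqrt (E - V y)) = 0 := by
      rw [intervalIntegral.integral_congr (g := fun _ => (0:ℝ))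
        (fun y hy => Real.sqrt_eq_zero'.mpr (by linarith [hside_m E hEI hle y hy]))]
      simp
    have hzp : (∫ y in b..up E, Real.sqrt (E - V y)) = 0 := by
      rw [intervalIntegral.integral_congr (g := fun _ => (0:ℝ))
        (fun y hy => Real.sqrt_eq_zero'.mpr (by
          rw [Set.uIcc_comm] at hy
          linarith [hside_p E hEI hle y hy]))]
      simp
    have i1 : IntervalIntegrable (fun y => Real.sqrt (E - V y)) volume (um E) a :=
      (hconts E).intervalIntegrable _ _
    have i2 : IntervalIntegrable (fun y => Real.sqrt (E - V y)) volume a b :=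
      (hconts E).intervalIntegrable _ _
    have i3 : IntervalIntegrable (fun y => Real.sqrt (E - V y)) volume b (up E) :=
      (hconts E).intervalIntegrable _ _
    have h1 := intervalIntegral.integral_add_adjacent_intervals i1 (i2.trans i3)
    have h2 := intervalIntegral.integral_add_adjacent_intervals i2 i3
    rw [← h1, ← h2, hzm, hzp]
    ring
  -- localization of the inverse-sqrt integral at E₀
  set g0 : ℝ → ℝ := fun y => 1 / Real.sqrt (E₀ - V y) with hg0
  have hg0sm : ∀ y ∈ Set.uIcc p a, g0 y = 0 := by
    intro y hy
    simp only [hg0]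
    rw [Real.sqrt_eq_zero'.mpr (by linarith [hside_m E₀ hE₀ hE₀E₁ y hy])]
    simp
  have hg0sp : ∀ y ∈ Set.uIcc P b, g0 y = 0 := by
    intro y hy
    simp only [hg0]
    rw [Real.sqrt_eq_zero'.mpr (by linarith [hside_p E₀ hE₀ hE₀E₁ y hy])]
    simp
  have hint0 : IntervalIntegrable g0 volume p P := hint E₀ hE₀
  have hintm : IntervalIntegrable g0 volume a p := by
    rw [intervalIntegrable_iff]
    exact (integrableOn_zero (s := Set.uIoc a p)).congr_fun
      (fun y hy => (hg0sm y (by rw [Set.uIcc_comm]; exact Set.uIoc_subset_uIcc hy)).symm)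
      measurableSet_uIoc
  have hintP : IntervalIntegrable g0 volume P b := by
    rw [intervalIntegrable_iff]
    exact (integrableOn_zero (s := Set.uIoc P b)).congr_fun
      (fun y hy => (hg0sp y (Set.uIoc_subset_uIcc hy)).symm)
      measurableSet_uIoc
  have hJloc : (∫ y in p..P, g0 y) = ∫ y in a..b, g0 y := by
    have z1 : (∫ y in a..p, g0 y) = 0 := by
      rw [intervalIntegral.integral_congr (g := fun _ => (0:ℝ))
        (fun y hy => hg0sm y (by rwa [Set.uIcc_comm] at hy))]
      simp
    have z2 : (∫ y in P..b, g0 y) = 0 := by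
      rw [intervalIntegral.integral_congr (g := fun _ => (0:ℝ)) (fun y hy => hg0sp y hy)]
      simp
    have h1 := intervalIntegral.integral_add_adjacent_intervals hintm hint0
    have h2 := intervalIntegral.integral_add_adjacent_intervals (hintm.trans hint0) hintP
    rw [← h2, ← h1, z1, z2]
    ring
  -- points in [a,b] where V = E₀ are only p and P
  have hVneq : ∀ y ∈ Set.Ioc a b, y ∉ ({p, P} : Set ℝ) → V y ≠ E₀ := by
    intro y hy hyZ hVy
    have hynep : y ≠ p := fun h => hyZ (by rw [h]; exact Set.mem_insert _ _)
    have hyneP : y ≠ P := fun h => hyZ (by rw [h]; exact Set.mem_insert_of_mem _ rfl)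
    have hy' : y ∈ Set.uIcc a b := by
      rw [Set.uIcc_of_le hab.le]; exact ⟨hy.1.le, hy.2⟩
    have hsub : Set.uIcc E₀ E₁ ⊆ I := by
      rw [Set.uIcc_of_le hE₀E₁]; exact hIconn.out hE₀ hE₁I
    rcases Set.uIcc_subset_uIcc_union_uIcc (b := p) hy' with h1 | h2
    · -- y ∈ uIcc a p
      obtain ⟨E', hE', hyE'⟩ := intermediate_value_uIcc (humc.mono hsub)
        (by rw [Set.uIcc_comm] at h1; exact h1)
      have hVyE' : V y = E' := by rw [← hyE']; exact hVm E' (hsub hE')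
      have : E' = E₀ := by rw [← hVyE', hVy]
      exact hynep (by rw [← hyE', this])
    · rcases Set.uIcc_subset_uIcc_union_uIcc (b := P) h2 with h3 | h4
      · rw [Set.uIcc_of_le hpP.le] at h3
        have : y ∈ Set.Ioo p P :=
          ⟨lt_of_le_of_ne h3.1 (Ne.symm hynep), lt_of_le_of_ne h3.2 hyneP⟩
        exact absurd hVy (ne_of_lt (hbelow E₀ hE₀ y this))
      · obtain ⟨E', hE', hyE'⟩ := intermediate_value_uIcc (hupc.mono hsub) h4
        have hVyE' : V y = E' := by rw [← hyE']; exact hVp E' (hsub hE')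
        have : E' = E₀ := by rw [← hVyE', hVy]
        exact hyneP (by rw [← hyE', this])
  have hZ0 : volume ({p, P} : Set ℝ) = 0 := Set.Finite.measure_zero (Set.toFinite _) _
  have hae_ne : ∀ᵐ y ∂volume.restrict (Set.Ioc a b), V y ≠ E₀ := by
    have h1 : ∀ᵐ y ∂volume.restrict (Set.Ioc a b), y ∉ ({p, P} : Set ℝ) :=
      ae_restrict_of_ae (measure_eq_zero_iff_ae_notMem.mp hZ0)
    have h2 := ae_restrict_mem (μ := volume) (s := Set.Ioc a b) measurableSet_Ioc
    filter_upwards [h1, h2] with y h1' h2'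
    exact hVneq y h2' h1'
  -- the dominating function
  set bound : ℝ → ℝ := fun y => (Real.sqrt |E₀ - V y|)⁻¹ with hbound
  have hbound_nonneg : ∀ y, 0 ≤ bound y := fun y => inv_nonneg.mpr (Real.sqrt_nonneg _)
  have hbm : Measurable bound :=
    ((Real.continuous_sqrt.measurable).comp ((measurable_const.sub hVc.measurable).abs)).inv
  -- integrability of the dominating function on each side piece
  have hside_int : ∀ (z w r : ℝ), 0 < r → deriv V z ≠ 0 →
      (∀ y, |y - z| ≤ r → |deriv V z| / 2 * |y - z| ≤ |V y - V z|) →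
      V z = E₀ → |w - z| < r → IntegrableOn bound (Set.uIcc w z) := by
    intro z w r hr hdz hest hVz hwz
    have hm2pos : 0 < |deriv V z| / 2 := by
      have := abs_pos.mpr hdz; linarith
    have hdist : ∀ y ∈ Set.uIcc w z, |y - z| ≤ |w - z| := by
      intro y hy
      rcases le_total w z with h | h
      · rw [Set.uIcc_of_le h] at hy
        rw [abs_of_nonpos (by linarith [hy.2] : y - z ≤ 0),
          abs_of_nonpos (by linarith : w - z ≤ 0)]
        linarith [hy.1]
      · rw [Set.uIcc_of_ge h] at hy
        rw [abs_of_nonneg (by linarith [hy.1] : 0 ≤ y - z),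
          abs_of_nonneg (by linarith : 0 ≤ w - z)]
        linarith [hy.2]
    have hsub : Set.uIcc w z ⊆ Set.Icc (z - r) (z + r) := by
      intro y hy
      have h1 : |y - z| ≤ r := le_of_lt (lt_of_le_of_lt (hdist y hy) hwz)
      rw [abs_le] at h1
      exact ⟨by linarith [h1.1], by linarith [h1.2]⟩
    set C := (Real.sqrt (|deriv V z| / 2))⁻¹ with hC
    have hCnn : 0 ≤ C := inv_nonneg.mpr (Real.sqrt_nonneg _)
    have hD0 : IntegrableOn (fun y => C * |y - z| ^ (-(1/2) : ℝ)) (Set.Icc (z - r) (z + r)) :=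
      (integrableOn_abs_rpow_neg_half z (z - r) (z + r)).const_mul C
    have hD : IntegrableOn (fun y => C * |y - z| ^ (-(1/2) : ℝ)) (Set.uIcc w z) :=
      hD0.mono_set hsub
    apply hD.mono' hbm.aestronglyMeasurable.restrict
    filter_upwards [ae_restrict_mem measurableSet_uIcc] with y hy
    rw [Real.norm_eq_abs, abs_of_nonneg (hbound_nonneg y)]
    rcases eq_or_ne y z with rfl | hyz
    · have : bound y = 0 := by
        simp only [hbound]
        rw [hVz, sub_self, abs_zero, Real.sqrt_zero, inv_zero]
      rw [this]
      positivity
    · have h1 : |y - z| ≤ r := le_of_lt (lt_of_le_of_lt (hdist y hy) hwz)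
      have h2 : |deriv V z| / 2 * |y - z| ≤ |E₀ - V y| := by
        have h2' := hest y h1
        rw [hVz] at h2'
        rwa [abs_sub_comm (V y) E₀] at h2'
      have habs : 0 < |y - z| := abs_pos.mpr (sub_ne_zero.mpr hyz)
      have hpos1 : 0 < Real.sqrt (|deriv V z| / 2 * |y - z|) :=
        Real.sqrt_pos.mpr (by positivity)
      calc bound y ≤ (Real.sqrt (|deriv V z| / 2 * |y - z|))⁻¹ := by
            simp only [hbound]
            exact inv_anti₀ hpos1 (Real.sqrt_le_sqrt h2)
        _ = C * |y - z| ^ (-(1/2) : ℝ) := by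
            rw [Real.sqrt_mul hm2pos.le, mul_inv, hC]
            congr 1
            rw [Real.rpow_neg (abs_nonneg _), Real.sqrt_eq_rpow]
  -- integrability of the dominating function on the middle piece
  have hmid : IntegrableOn bound (Set.uIcc p P) := by
    rw [Set.uIcc_of_le hpP.le, integrableOn_Icc_iff_integrableOn_Ioc]
    have base : IntegrableOn g0 (Set.Ioc p P) := by
      have := intervalIntegrable_iff.mp hint0
      rwa [Set.uIoc_of_le hpP.le] at this
    apply base.congr
    have h2 := ae_restrict_mem (μ := volume) (s := Set.Ioc p P) measurableSet_Ioc
    have h3 : ∀ᵐ y ∂volume.restrict (Set.Ioc p P), y ≠ P := by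
      apply ae_restrict_of_ae
      have : volume ({P} : Set ℝ) = 0 := Real.volume_singleton
      filter_upwards [measure_eq_zero_iff_ae_notMem.mp this] with y hy
      simpa using hy
    filter_upwards [h2, h3] with y hy hyP
    have hyo : y ∈ Set.Ioo p P := ⟨hy.1, lt_of_le_of_ne hy.2 hyP⟩
    have hb' : V y < E₀ := hbelow E₀ hE₀ y hyo
    simp only [hg0, hbound]
    rw [abs_of_pos (by linarith : (0:ℝ) < E₀ - V y), one_div]
  have hcover : Set.Ioc a b ⊆ Set.uIcc a p ∪ (Set.uIcc p P ∪ Set.uIcc P b) := by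
    intro y hy
    have hy' : y ∈ Set.uIcc a b := by
      rw [Set.uIcc_of_le hab.le]; exact ⟨hy.1.le, hy.2⟩
    rcases Set.uIcc_subset_uIcc_union_uIcc (b := p) hy' with h1 | h2
    · exact Or.inl h1
    · exact Or.inr (Set.uIcc_subset_uIcc_union_uIcc (b := P) h2)
  have hbint : IntegrableOn bound (Set.Ioc a b) := by
    apply IntegrableOn.mono_set _ hcover
    refine IntegrableOn.union ?_ (IntegrableOn.union hmid ?_)
    · exact hside_int p a rm hrm (hV'm E₀ hE₀) hestm hVmE hap
    · have := hside_int P b rP hrP (hV'p E₀ hE₀) hestP hVPE hbP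
      rwa [Set.uIcc_comm] at this
  -- the limit integrand
  set f : ℝ → ℝ := fun y => (2 * Real.sqrt (E₀ - V y))⁻¹ with hf
  have hmain : Filter.Tendsto
      (fun E => ∫ y in Set.Ioc a b, (Real.sqrt (E - V y) - Real.sqrt (E₀ - V y)) / (E - E₀))
      (nhdsWithin E₀ {E₀}ᶜ) (nhds (∫ y in Set.Ioc a b, f y)) := by
    apply MeasureTheory.tendsto_integral_filter_of_dominated_convergence bound
    · apply Filter.Eventually.of_forall
      intro E
      exact (((hconts E).sub (hconts E₀)).div_const _).aestronglyMeasurable.restrict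
    · filter_upwards [self_mem_nhdsWithin] with E hE
      have hEne : E ≠ E₀ := hE
      filter_upwards [hae_ne] with y hy
      have hsne : E₀ - V y ≠ 0 := sub_ne_zero.mpr (Ne.symm hy)
      have hhne : E - E₀ ≠ 0 := sub_ne_zero.mpr hEne
      have hb' := sqrt_slope_bound hsne hhne
      rw [Real.norm_eq_abs]
      simp only [hbound]
      rw [show E - V y = (E₀ - V y) + (E - E₀) by ring]
      exact hb'
    · exact hbint
    · filter_upwards [hae_ne] with y hy
      rcases hy.lt_or_gt with hlt2 | hgt2
      · -- V y < E₀
        have pos : 0 < E₀ - V y := by linarith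
        have h1 : HasDerivAt (fun E : ℝ => E - V y) 1 E₀ := (hasDerivAt_id E₀).sub_const (V y)
        have h2 := (Real.hasDerivAt_sqrt (ne_of_gt pos)).comp E₀ h1
        have h3 : HasDerivAt (fun E => Real.sqrt (E - V y)) (f y) E₀ := by
          simp only [hf]
          exact h2.congr_deriv (by rw [one_div, mul_one])
        rw [hasDerivAt_iff_tendsto_slope] at h3
        exact h3.congr (fun E => by rw [slope_def_field])
      · -- E₀ < V y
        have hz1 : Real.sqrt (E₀ - V y) = 0 := Real.sqrt_eq_zero'.mpr (by linarith)
        have hfy : f y = 0 := by simp only [hf]; rw [hz1, mul_zero, inv_zero]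
        rw [hfy]
        have hball : Metric.ball E₀ (V y - E₀) ∈ nhds E₀ := Metric.ball_mem_nhds _ (by linarith)
        have hev : (fun _ : ℝ => (0:ℝ)) =ᶠ[nhdsWithin E₀ {E₀}ᶜ]
            (fun E => (Real.sqrt (E - V y) - Real.sqrt (E₀ - V y)) / (E - E₀)) := by
          filter_upwards [mem_nhdsWithin_of_mem_nhds hball] with E hE
          rw [Metric.mem_ball, Real.dist_eq] at hE
          have h1 : E - V y ≤ 0 := by
            have := (abs_lt.mp hE).2; linarith
          rw [Real.sqrt_eq_zero'.mpr h1, hz1]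
          simp
        exact Filter.Tendsto.congr' hev tendsto_const_nhds
  have hval : (∫ y in Set.Ioc a b, f y) = 2⁻¹ * ∫ y in a..b, g0 y := by
    rw [intervalIntegral.integral_of_le hab.le, ← MeasureTheory.integral_const_mul]
    apply MeasureTheory.integral_congr_ae
    apply Filter.Eventually.of_forall
    intro y
    simp only [hf, hg0]
    rw [mul_inv, one_div]
    try ring
  have hKey : HasDerivAt (fun E => ∫ y in a..b, Real.sqrt (E - V y))
      (2⁻¹ * ∫ y in a..b, g0 y) E₀ := by
    rw [hasDerivAt_iff_tendsto_slope, ← hval]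
    apply hmain.congr'
    filter_upwards [self_mem_nhdsWithin] with E hE
    rw [slope_def_field,
      ← intervalIntegral.integral_sub ((hconts E).intervalIntegrable a b)
        ((hconts E₀).intervalIntegrable a b),
      ← intervalIntegral.integral_div, intervalIntegral.integral_of_le hab.le]
  -- assembling the final result
  have hsq : Real.sqrt (2 / c) = Real.sqrt (2 * c) / c := by
    rw [show (2:ℝ)/c = (2*c)/c^2 by field_simp,
      Real.sqrt_div (by positivity) (c^2), Real.sqrt_sq hc.le]
  have heq : (Real.sqrt (2 * c) * ∫ y in p..P, g0 y) / c
      = 2 * Real.sqrt (2 / c) * (2⁻¹ * ∫ y in a..b, g0 y) := by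
    rw [← hJloc, hsq]
    field_simp
  have hfinal : HasDerivAt (fun E => 2 * Real.sqrt (2 / c) * ∫ y in a..b, Real.sqrt (E - V y))
      ((Real.sqrt (2 * c) * ∫ y in p..P, g0 y) / c) E₀ := by
    rw [heq]
    exact hKey.const_mul _
  apply hfinal.congr_of_eventuallyEq
  filter_upwards [Metric.ball_mem_nhds E₀ (by linarith : (0:ℝ) < δ/2)] with E hE
  have hEI : E ∈ I := hδI (Metric.ball_subset_ball (by linarith) hE)
  have hEle : E ≤ E₁ := by
    rw [Metric.mem_ball, Real.dist_eq] at hE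
    have := (abs_lt.mp hE).2
    simp only [hE₁def]
    linarith
  rw [hloc E hEI hEle]
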